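/- Let n = 2^k·m where k is a positive integer and m > 1 is odd. Then the total chromatic number of the unitary Cayley graph U_n equals φ(n) + 1. -/

import Mathlib

open Finset

section TCCdefs

variable (n p : ℕ)

/-- reduction mod p via val -/
def pcast (x : ZMod n) : ZMod p := (x.val : ZMod p)

open scoped Classical in
/-- the designated step for residue class i : a unit of ZMod n reducing to i mod p -/
noncomputable def dstep (i : ℕ) : ZMod n :=
  if h : ∃ s : ZMod n, IsUnit s ∧ pcast n p s = (i : ZMod p) then h.choose else 0

/-- x is a designated step -/
def Desig (x : ZMod n) : Prop :=
  ∃ i ∈ Finset.Icc 1 ((p - 1) / 2), x = dstep n p i ∨ x = -dstep n p i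

/-- canonical representative of the pair {x, -x} -/
noncomputable def rep (x : ZMod n) : ZMod n := if x.val ≤ (-x).val then x else -x

variable [NeZero n]

open scoped Classical in
/-- non-designated units -/
noncomputable def Afin : Finset (ZMod n) :=
  Finset.univ.filter (fun x => IsUnit x ∧ ¬ Desig n p x)

open scoped Classical in
noncomputable def Rfin : Finset (ZMod n) := (Afin n p).filter (fun x => rep n x = x)

noncomputable def idx (x : ZMod n) : ℕ :=
  if h : x ∈ Rfin n p then (Fintype.equivFin (Rfin n p) ⟨x, h⟩).val else 0

noncomputable def par (x : ZMod n) : ℕ := ((x.val : ZMod 2)).val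

open scoped Classical in
/-- the edge color -/
noncomputable def ecol (u v : ZMod n) : ℕ :=
  if IsUnit (u - v) ∧ u - v ≠ v - u then
    if Desig n p (u - v) then (pcast n p (u + v)).val
    else p + 2 * idx n p (rep n (u - v)) + par n (if v - u = rep n (u - v) then u else v)
  else 0

end TCCdefs

section TCClem

variable {n p : ℕ} [NeZero n]

lemma rep_or (x : ZMod n) : rep n x = x ∨ rep n x = -x := by
  unfold rep; split <;> simp

lemma rep_neg (x : ZMod n) : rep n (-x) = rep n x := by
  unfold rep
  simp only [neg_neg]
  rcases le_or_gt x.val ((-x).val) with h | h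
  · rcases eq_or_lt_of_le h with h' | h'
    · have hx : x = -x := ZMod.val_injective n h'
      simp [← hx]
    · rw [if_neg (by omega), if_pos h]
  · rw [if_pos h.le, if_neg (by omega)]

lemma rep_idem (x : ZMod n) : rep n (rep n x) = rep n x := by
  rcases rep_or x with h | h
  · simp only [h]
  · rw [h, rep_neg, ← h]

lemma desig_neg {x : ZMod n} (h : Desig n p x) : Desig n p (-x) := by
  obtain ⟨i, hi, h | h⟩ := h
  · exact ⟨i, hi, Or.inr (by rw [h])⟩
  · exact ⟨i, hi, Or.inl (by rw [h, neg_neg])⟩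

lemma desig_neg_iff {x : ZMod n} : Desig n p (-x) ↔ Desig n p x :=
  ⟨fun h => by have := desig_neg h; rwa [neg_neg] at this, desig_neg⟩

lemma ecol_symm (u v : ZMod n) : ecol n p u v = ecol n p v u := by
  unfold ecol
  by_cases hg : IsUnit (u - v) ∧ u - v ≠ v - u
  · have hg' : IsUnit (v - u) ∧ v - u ≠ u - v := by
      refine ⟨?_, Ne.symm hg.2⟩
      have := hg.1.neg; rwa [neg_sub] at this
    rw [if_pos hg, if_pos hg']
    have hvu : v - u = -(u - v) := by ring
    have hrep : rep n (v - u) = rep n (u - v) := by rw [hvu, rep_neg]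
    by_cases hd : Desig n p (u - v)
    · have hdv : Desig n p (v - u) := by rw [hvu]; exact desig_neg hd
      rw [if_pos hd, if_pos hdv, add_comm u v]
    · have hdv : ¬ Desig n p (v - u) := by
        rw [hvu, desig_neg_iff]; exact hd
      rw [if_neg hd, if_neg hdv, hrep]
      congr 2
      have hne : u - v ≠ -(u - v) := by rw [← hvu]; exact hg.2
      rcases rep_or (u - v) with h | h
      · have h1 : ¬ (v - u = rep n (u - v)) := by
          rw [hvu, h]; exact fun hh => hne hh.symm
        have h2 : u - v = rep n (u - v) := h.symm
        rw [if_neg h1, if_pos h2]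
      · have h1 : v - u = rep n (u - v) := by rw [hvu, h]
        have h2 : ¬ (u - v = rep n (u - v)) := by rw [← h] at hne; exact fun hh => hne hh
        rw [if_pos h1, if_neg h2]
  · have hg' : ¬ (IsUnit (v - u) ∧ v - u ≠ u - v) := by
      intro h
      exact hg ⟨by have := h.1.neg; rwa [neg_sub] at this, Ne.symm h.2⟩
    rw [if_neg hg, if_neg hg']

end TCClem

section TCCmain

variable {n p : ℕ} [NeZero n]

lemma pcast_eq (hpn : p ∣ n) (x : ZMod n) :
    pcast n p x = ZMod.castHom hpn (ZMod p) x := by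
  rw [ZMod.castHom_apply, ← ZMod.natCast_val]; rfl

lemma dstep_spec (hp : p.Prime) (hpn : p ∣ n) {i : ℕ} (hi : ¬ p ∣ i) :
    IsUnit (dstep n p i) ∧ pcast n p (dstep n p i) = (i : ZMod p) := by
  classical
  haveI : Fact p.Prime := ⟨hp⟩
  have hex : ∃ s : ZMod n, IsUnit s ∧ pcast n p s = (i : ZMod p) := by
    have hiu : IsUnit (i : ZMod p) := by
      rw [isUnit_iff_ne_zero, Ne, ZMod.natCast_eq_zero_iff]
      exact hi
    obtain ⟨u, hu⟩ := ZMod.unitsMap_surjective hpn hiu.unit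
    refine ⟨(u : (ZMod n)ˣ), u.isUnit, ?_⟩
    rw [pcast_eq hpn]
    have := congrArg Units.val hu
    rw [ZMod.unitsMap_def] at this
    simpa [IsUnit.unit_spec] using this
  unfold dstep
  rw [dif_pos hex]
  exact hex.choose_spec

lemma natCast_inj_small (hp : p.Prime) {i j : ℕ} (hi : i ∈ Finset.Icc 1 ((p-1)/2))
    (hj : j ∈ Finset.Icc 1 ((p-1)/2)) (h : (i : ZMod p) = (j : ZMod p)) : i = j := by
  simp only [Finset.mem_Icc] at hi hj
  have h1 : i < p := by have := hp.two_le; omega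
  have h2 : j < p := by have := hp.two_le; omega
  have := congrArg ZMod.val h
  rwa [ZMod.val_natCast_of_lt h1, ZMod.val_natCast_of_lt h2] at this

lemma natCast_ne_neg (hp : p.Prime) {i j : ℕ} (hi : i ∈ Finset.Icc 1 ((p-1)/2))
    (hj : j ∈ Finset.Icc 1 ((p-1)/2)) (h : (i : ZMod p) = -(j : ZMod p)) : False := by
  simp only [Finset.mem_Icc] at hi hj
  have h0 : ((i + j : ℕ) : ZMod p) = 0 := by push_cast; rw [h]; ring
  rw [ZMod.natCast_eq_zero_iff] at h0
  have := Nat.le_of_dvd (by omega) h0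
  have := hp.two_le
  omega

lemma not_dvd_of_mem_Icc (hp : p.Prime) {i : ℕ} (hi : i ∈ Finset.Icc 1 ((p-1)/2)) :
    ¬ p ∣ i := by
  simp only [Finset.mem_Icc] at hi
  intro h
  have := Nat.le_of_dvd (by omega) h
  have := hp.two_le
  omega

open scoped Classical in
lemma card_isUnit : (Finset.univ.filter (fun x : ZMod n => IsUnit x)).card = n.totient := by
  rw [← ZMod.card_units_eq_totient n]
  have himg : (Finset.univ.filter (fun x : ZMod n => IsUnit x)) =
      Finset.univ.image (fun u : (ZMod n)ˣ => (u : ZMod n)) := by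
    ext x
    simp [IsUnit, eq_comm]
  rw [himg, Finset.card_image_of_injective _ Units.val_injective]
  simp

open scoped Classical in
lemma Afin_card (hp : p.Prime) (hp2 : p ≠ 2) (hpn : p ∣ n) :
    (Afin n p).card + (p - 1) = n.totient ∧ p - 1 ≤ n.totient := by
  set U := Finset.univ.filter (fun x : ZMod n => IsUnit x) with hU
  set D := ((Finset.Icc 1 ((p-1)/2)).image (fun i => dstep n p i)) ∪
      ((Finset.Icc 1 ((p-1)/2)).image (fun i => -(dstep n p i))) with hD
  have hDU : D ⊆ U := by
    intro x hx
    simp only [hD, Finset.mem_union, Finset.mem_image] at hx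
    rcases hx with ⟨i, hi, rfl⟩ | ⟨i, hi, rfl⟩
    · simp only [hU, Finset.mem_filter, Finset.mem_univ, true_and]
      exact (dstep_spec hp hpn (not_dvd_of_mem_Icc hp hi)).1
    · simp only [hU, Finset.mem_filter, Finset.mem_univ, true_and]
      exact (dstep_spec hp hpn (not_dvd_of_mem_Icc hp hi)).1.neg
  have hAD : Afin n p = U \ D := by
    ext x
    simp only [Afin, hU, hD, Finset.mem_sdiff, Finset.mem_filter, Finset.mem_univ, true_and,
      Finset.mem_union, Finset.mem_image]
    simp only [Desig]
    constructor
    · rintro ⟨h1, h2⟩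
      refine ⟨h1, fun hc => h2 ?_⟩
      rcases hc with ⟨i, hi, rfl⟩ | ⟨i, hi, rfl⟩
      · exact ⟨i, hi, Or.inl rfl⟩
      · exact ⟨i, hi, Or.inr rfl⟩
    · rintro ⟨h1, h2⟩
      refine ⟨h1, fun hc => h2 ?_⟩
      rcases hc with ⟨i, hi, rfl | rfl⟩
      · exact Or.inl ⟨i, hi, rfl⟩
      · exact Or.inr ⟨i, hi, rfl⟩
  have hinj1 : Set.InjOn (fun i => dstep n p i) (Finset.Icc 1 ((p-1)/2)) := by
    intro i hi j hj hij
    have hicast := (dstep_spec hp hpn (not_dvd_of_mem_Icc hp (by simpa using hi))).2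
    have hjcast := (dstep_spec hp hpn (not_dvd_of_mem_Icc hp (by simpa using hj))).2
    refine natCast_inj_small hp (by simpa using hi) (by simpa using hj) ?_
    rw [← hicast, ← hjcast]
    exact congrArg _ hij
  have hinj2 : Set.InjOn (fun i => -(dstep n p i)) (Finset.Icc 1 ((p-1)/2)) := by
    intro i hi j hj hij
    exact hinj1 hi hj (neg_injective hij)
  have hdisj : Disjoint ((Finset.Icc 1 ((p-1)/2)).image (fun i => dstep n p i))
      ((Finset.Icc 1 ((p-1)/2)).image (fun i => -(dstep n p i))) := by
    rw [Finset.disjoint_left]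
    rintro x hx hx'
    simp only [Finset.mem_image] at hx hx'
    obtain ⟨i, hi, hix⟩ := hx
    obtain ⟨j, hj, hjx⟩ := hx'
    have hicast := (dstep_spec hp hpn (not_dvd_of_mem_Icc hp hi)).2
    have hjcast := (dstep_spec hp hpn (not_dvd_of_mem_Icc hp hj)).2
    have hneg : pcast n p (-(dstep n p j)) = -(pcast n p (dstep n p j)) := by
      rw [pcast_eq hpn, pcast_eq hpn, map_neg]
    have hde : dstep n p i = -(dstep n p j) := by rw [hix, ← hjx]
    refine natCast_ne_neg hp hi hj ?_
    rw [← hicast, ← hjcast, ← hneg, hde]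
  have hodd : p % 2 = 1 := (Nat.Prime.eq_two_or_odd hp).resolve_left hp2
  have hcard1 : ((Finset.Icc 1 ((p-1)/2)).image (fun i => dstep n p i)).card = (p-1)/2 := by
    rw [Finset.card_image_of_injOn hinj1, Nat.card_Icc]; omega
  have hcard2 : ((Finset.Icc 1 ((p-1)/2)).image (fun i => -(dstep n p i))).card = (p-1)/2 := by
    rw [Finset.card_image_of_injOn hinj2, Nat.card_Icc]; omega
  have hDcard : D.card = p - 1 := by
    rw [hD, Finset.card_union_of_disjoint hdisj, hcard1, hcard2]
    have := hp.two_le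
    omega
  have hUcard : U.card = n.totient := card_isUnit
  have hDle : D.card ≤ U.card := Finset.card_le_card hDU
  have hsd := Finset.card_sdiff_add_card_eq_card hDU
  constructor
  · rw [hAD]; omega
  · omega

lemma two_ne_zero_zmod (hn : 2 < n) : (2 : ZMod n) ≠ 0 := by
  intro h
  have : ((2 : ℕ) : ZMod n) = 0 := by exact_mod_cast h
  rw [ZMod.natCast_eq_zero_iff] at this
  have := Nat.le_of_dvd (by norm_num) this
  omega

lemma unit_ne_neg_self (hn : 2 < n) {x : ZMod n} (hx : IsUnit x) : x ≠ -x := by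
  intro h
  have hxx : x + x = 0 := by nth_rewrite 2 [h]; exact add_neg_cancel x
  have h2 : x * 2 = x * 0 := by
    calc x * 2 = x + x := by ring
    _ = 0 := hxx
    _ = x * 0 := by ring
  exact two_ne_zero_zmod hn (hx.mul_left_cancel h2)

open scoped Classical in
lemma Rfin_card (hn : 2 < n) : 2 * (Rfin n p).card = (Afin n p).card := by
  have hsub : Rfin n p ⊆ Afin n p := Finset.filter_subset _ _
  have hmemA : ∀ x ∈ Afin n p, IsUnit x ∧ ¬ Desig n p x := by
    intro x hx
    simpa [Afin] using hx
  have hrepne : ∀ x ∈ Afin n p, x ≠ -x := fun x hx => unit_ne_neg_self hn (hmemA x hx).1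
  have hnegA : ∀ x ∈ Afin n p, -x ∈ Afin n p := by
    intro x hx
    obtain ⟨h1, h2⟩ := hmemA x hx
    simp only [Afin, Finset.mem_filter, Finset.mem_univ, true_and]
    exact ⟨h1.neg, fun hc => h2 (by simpa using desig_neg hc)⟩
  have hbij : (Rfin n p).card = ((Afin n p) \ (Rfin n p)).card := by
    apply Finset.card_bij (fun x _ => -x)
    · intro x hx
      simp only [Rfin, Finset.mem_filter] at hx
      obtain ⟨hxA, hxr⟩ := hx
      simp only [Finset.mem_sdiff, Rfin, Finset.mem_filter]
      refine ⟨hnegA x hxA, fun hc => ?_⟩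
      have hc2 := hc.2
      rw [rep_neg, hxr] at hc2
      exact hrepne x hxA hc2
    · intro x hx y hy hxy
      exact neg_injective hxy
    · intro y hy
      simp only [Finset.mem_sdiff, Rfin, Finset.mem_filter] at hy
      obtain ⟨hyA, hyr⟩ := hy
      have hry : rep n y = -y := by
        rcases rep_or y with h | h
        · exact absurd h (fun hh => hyr ⟨hyA, hh⟩)
        · exact h
      refine ⟨-y, ?_, by simp⟩
      simp only [Rfin, Finset.mem_filter]
      exact ⟨hnegA y hyA, by rw [rep_neg, hry]⟩
  have := Finset.card_sdiff_add_card_eq_card hsub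
  omega

lemma idx_lt {x : ZMod n} (hx : x ∈ Rfin n p) : idx n p x < (Rfin n p).card := by
  unfold idx
  rw [dif_pos hx]
  have := (Fintype.equivFin (Rfin n p) ⟨x, hx⟩).isLt
  simpa using this

lemma idx_inj {x y : ZMod n} (hx : x ∈ Rfin n p) (hy : y ∈ Rfin n p)
    (h : idx n p x = idx n p y) : x = y := by
  unfold idx at h
  rw [dif_pos hx, dif_pos hy] at h
  have := (Fintype.equivFin (Rfin n p)).injective (Fin.val_injective h)
  exact Subtype.mk_eq_mk.mp this

lemma par_lt (x : ZMod n) : par n x < 2 := ZMod.val_lt _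

lemma par_eq_pcast (x : ZMod n) : par n x = (pcast n 2 x).val := rfl

lemma par_sub_unit_ne (h2n : 2 ∣ n) {w s : ZMod n} (hs : IsUnit s) :
    par n (w - s) ≠ par n w := by
  intro hc
  rw [par_eq_pcast, par_eq_pcast] at hc
  have hcc : pcast n 2 (w - s) = pcast n 2 w := ZMod.val_injective 2 hc
  rw [pcast_eq h2n, pcast_eq h2n, map_sub, sub_eq_self] at hcc
  exact (hs.map (ZMod.castHom h2n (ZMod 2))).ne_zero hcc

open scoped Classical in
lemma rep_mem_Rfin {x : ZMod n} (hu : IsUnit x) (hd : ¬ Desig n p x) :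
    rep n x ∈ Rfin n p := by
  simp only [Rfin, Afin, Finset.mem_filter, Finset.mem_univ, true_and]
  refine ⟨⟨?_, ?_⟩, rep_idem x⟩
  · rcases rep_or x with h | h
    · rw [h]; exact hu
    · rw [h]; exact hu.neg
  · rcases rep_or x with h | h
    · rw [h]; exact hd
    · rw [h, desig_neg_iff]; exact hd

lemma rep_isUnit {x : ZMod n} (hu : IsUnit x) : IsUnit (rep n x) := by
  rcases rep_or x with h | h
  · rw [h]; exact hu
  · rw [h]; exact hu.neg

lemma sub_eq_sub_cancel {x y z : ZMod n} (h : x - y = x - z) : y = z := by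
  calc y = x - (x - y) := by ring
  _ = x - (x - z) := by rw [h]
  _ = z := by ring

lemma guard_holds (hn2 : 2 < n) {x y : ZMod n} (hu : IsUnit (x - y)) :
    IsUnit (x - y) ∧ x - y ≠ y - x := by
  refine ⟨hu, ?_⟩
  have := unit_ne_neg_self hn2 hu
  rwa [neg_sub] at this

lemma ecol_vertex_ne (hp : p.Prime) (hpn : p ∣ n) (hn2 : 2 < n)
    {x y : ZMod n} (hu : IsUnit (x - y)) :
    ecol n p x y ≠ (pcast n p (2 * x)).val := by
  haveI : NeZero p := ⟨hp.pos.ne'⟩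
  haveI : Fact (1 < p) := ⟨hp.one_lt⟩
  unfold ecol
  rw [if_pos (guard_holds hn2 hu)]
  by_cases hd : Desig n p (x - y)
  · rw [if_pos hd]
    intro hc
    have hcc : pcast n p (x + y) = pcast n p (2 * x) := ZMod.val_injective p hc
    rw [pcast_eq hpn, pcast_eq hpn] at hcc
    have h0 : (ZMod.castHom hpn (ZMod p)) (x - y) = 0 := by
      have hxy2 : x - y = 2 * x - (x + y) := by ring
      rw [hxy2, map_sub, ← hcc, sub_self]
    exact (hu.map (ZMod.castHom hpn (ZMod p))).ne_zero h0
  · rw [if_neg hd]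
    intro hc
    have hlt : (pcast n p (2 * x)).val < p := ZMod.val_lt _
    omega

lemma ecol_lt (hp : p.Prime) (hp2 : p ≠ 2) (hpn : p ∣ n) (hn2 : 2 < n)
    {x y : ZMod n} (hu : IsUnit (x - y)) :
    ecol n p x y < n.totient + 1 := by
  haveI : NeZero p := ⟨hp.pos.ne'⟩
  obtain ⟨hA, hple⟩ := Afin_card (n := n) hp hp2 hpn
  have hR := Rfin_card (n := n) (p := p) hn2
  unfold ecol
  rw [if_pos (guard_holds hn2 hu)]
  by_cases hd : Desig n p (x - y)
  · rw [if_pos hd]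
    have := ZMod.val_lt (pcast n p (x + y))
    have := hp.two_le
    omega
  · rw [if_neg hd]
    have h1 : idx n p (rep n (x - y)) < (Rfin n p).card := idx_lt (rep_mem_Rfin hu hd)
    have h2 := par_lt (n := n) (if y - x = rep n (x - y) then x else y)
    have := hp.two_le
    omega

lemma ecol_edge_ne (hp : p.Prime) (hp2 : p ≠ 2) (hpn : p ∣ n) (h2n : 2 ∣ n) (hn2 : 2 < n)
    {x y z : ZMod n} (hyz : y ≠ z)
    (huy : IsUnit (x - y)) (huz : IsUnit (x - z)) :
    ecol n p x y ≠ ecol n p x z := by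
  haveI : NeZero p := ⟨hp.pos.ne'⟩
  haveI : Fact (1 < p) := ⟨hp.one_lt⟩
  have hxyz : x - y ≠ x - z := fun h => hyz (sub_eq_sub_cancel h)
  unfold ecol
  rw [if_pos (guard_holds hn2 huy), if_pos (guard_holds hn2 huz)]
  by_cases hd1 : Desig n p (x - y) <;> by_cases hd2 : Desig n p (x - z)
  · -- both designated
    rw [if_pos hd1, if_pos hd2]
    intro hc
    have hcc : pcast n p (x + y) = pcast n p (x + z) := ZMod.val_injective p hc
    rw [pcast_eq hpn, pcast_eq hpn] at hcc
    obtain ⟨i, hi, hiy⟩ := hd1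
    obtain ⟨j, hj, hjz⟩ := hd2
    have hicast := (dstep_spec hp hpn (not_dvd_of_mem_Icc hp hi)).2
    have hjcast := (dstep_spec hp hpn (not_dvd_of_mem_Icc hp hj)).2
    rw [pcast_eq hpn] at hicast hjcast
    set φ := ZMod.castHom hpn (ZMod p) with hφ
    have hkey : φ (x - y) = φ (x - z) := by
      have hsub : φ (x - y) - φ (x - z) = -(φ (x + y) - φ (x + z)) := by
        rw [← map_sub, ← map_sub, ← map_neg]
        congr 1
        ring
      rw [hcc, sub_self, neg_zero] at hsub
      exact sub_eq_zero.mp hsub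
    rcases hiy with h | h <;> rcases hjz with h' | h'
    · rw [h, h', hicast, hjcast] at hkey
      have hij := natCast_inj_small hp hi hj hkey
      exact hxyz (by rw [h, h', hij])
    · rw [h, h', map_neg, hicast, hjcast] at hkey
      exact natCast_ne_neg hp hi hj hkey
    · rw [h, h', map_neg, hicast, hjcast] at hkey
      exact natCast_ne_neg hp hj hi hkey.symm
    · rw [h, h', map_neg, map_neg, hicast, hjcast] at hkey
      have hij := natCast_inj_small hp hi hj (neg_injective hkey)
      exact hxyz (by rw [h, h', hij])
  · rw [if_pos hd1, if_neg hd2]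
    intro hc
    have := ZMod.val_lt (pcast n p (x + y))
    omega
  · rw [if_neg hd1, if_pos hd2]
    intro hc
    have := ZMod.val_lt (pcast n p (x + z))
    omega
  · -- both matchings
    rw [if_neg hd1, if_neg hd2]
    intro hc
    have hb1 := par_lt (n := n) (if y - x = rep n (x - y) then x else y)
    have hb2 := par_lt (n := n) (if z - x = rep n (x - z) then x else z)
    have hidx : idx n p (rep n (x - y)) = idx n p (rep n (x - z)) := by omega
    have hpar : par n (if y - x = rep n (x - y) then x else y) =
        par n (if z - x = rep n (x - z) then x else z) := by omega
    have hss : rep n (x - y) = rep n (x - z) :=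
      idx_inj (rep_mem_Rfin huy hd1) (rep_mem_Rfin huz hd2) hidx
    have hsu : IsUnit (rep n (x - y)) := rep_isUnit huy
    have hsne : rep n (x - y) ≠ -(rep n (x - y)) := unit_ne_neg_self hn2 hsu
    have hney : x - y ≠ -(x - y) := unit_ne_neg_self hn2 huy
    have hnez : x - z ≠ -(x - z) := unit_ne_neg_self hn2 huz
    rcases rep_or (x - y) with h1 | h1 <;> rcases rep_or (x - z) with h2 | h2
    · exact hxyz (h1.symm.trans (hss.trans h2))
    · -- rep = x - y and rep (x-z) = -(x-z)
      have hce : ¬ (y - x = rep n (x - y)) := by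
        rw [h1]
        intro hcc
        exact hney (by linear_combination -hcc)
      have hcf : z - x = rep n (x - z) := by
        rw [← hss, h1]
        have : x - z = -(x - y) := by rw [← h1, hss, h2, neg_neg]
        rw [show z - x = -(x - z) from by ring, this, neg_neg]
      rw [if_neg hce, if_pos hcf] at hpar
      have hyy : y = x - (x - y) := by ring
      rw [hyy] at hpar
      exact par_sub_unit_ne h2n huy hpar
    · -- rep (x-y) = -(x-y) and rep (x-z) = x - z
      have hce : y - x = rep n (x - y) := by
        rw [h1]; ring
      have hcf : ¬ (z - x = rep n (x - z)) := by
        rw [h2]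
        intro hcc
        exact hnez (by linear_combination -hcc)
      rw [if_pos hce, if_neg hcf] at hpar
      have hzz : z = x - (x - z) := by ring
      rw [hzz] at hpar
      exact par_sub_unit_ne h2n huz hpar.symm
    · have : x - y = x - z := neg_injective (h1.symm.trans (hss.trans h2))
      exact hxyz this

end TCCmain
/-- A total coloring of a simple graph `G` with colors in `Fin k`: adjacent vertices get
distinct colors, edges sharing an endpoint get distinct colors, and each edge gets a color
distinct from the colors of both its endpoints. -/
def IsTotalColoring {V : Type*} (G : SimpleGraph V) {k : ℕ}
    (cV : V → Fin k) (cE : G.edgeSet → Fin k) : Prop :=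
  (∀ u v : V, G.Adj u v → cV u ≠ cV v) ∧
  (∀ e f : G.edgeSet, e ≠ f → (∃ x, x ∈ (e : Sym2 V) ∧ x ∈ (f : Sym2 V)) → cE e ≠ cE f) ∧
  (∀ (e : G.edgeSet) (v : V), v ∈ (e : Sym2 V) → cE e ≠ cV v)

/-- The total chromatic number: the least `k` admitting a total coloring with `k` colors. -/
noncomputable def totalChromaticNumber {V : Type*} (G : SimpleGraph V) : ℕ :=
  sInf {k | ∃ (cV : V → Fin k) (cE : G.edgeSet → Fin k), IsTotalColoring G cV cE}

/-- The unitary Cayley graph `U n` on `ZMod n`: `u` and `v` are adjacent iff `u ≠ v` and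
`u - v` is a unit of `ZMod n` (equivalently, `gcd(u - v, n) = 1`). -/
def unitaryCayleyGraph (n : ℕ) : SimpleGraph (ZMod n) :=
  SimpleGraph.fromRel (fun u v => IsUnit (u - v))

lemma ucg_adj {n : ℕ} {u v : ZMod n} :
    (unitaryCayleyGraph n).Adj u v ↔ u ≠ v ∧ IsUnit (u - v) := by
  unfold unitaryCayleyGraph
  rw [SimpleGraph.fromRel_adj]
  constructor
  · rintro ⟨h, h1 | h1⟩
    · exact ⟨h, h1⟩
    · refine ⟨h, ?_⟩
      have := h1.neg; rwa [neg_sub] at this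
  · rintro ⟨h, h1⟩; exact ⟨h, Or.inl h1⟩

open scoped Classical in
lemma lower_bound {n K : ℕ} [NeZero n] (hn : 1 < n)
    (cV : ZMod n → Fin K) (cE : (unitaryCayleyGraph n).edgeSet → Fin K)
    (h : IsTotalColoring (unitaryCayleyGraph n) cV cE) : n.totient + 1 ≤ K := by
  haveI : Fact (1 < n) := ⟨hn⟩
  set U := Finset.univ.filter (fun x : ZMod n => IsUnit x) with hU
  have hadj : ∀ x ∈ U, (unitaryCayleyGraph n).Adj 0 x := by
    intro x hx
    simp only [hU, Finset.mem_filter, Finset.mem_univ, true_and] at hx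
    rw [ucg_adj]
    constructor
    · intro h0
      rw [← h0] at hx
      exact not_isUnit_zero hx
    · rw [zero_sub]; exact hx.neg
  set F : ZMod n → Fin K := fun x =>
    if hx : (unitaryCayleyGraph n).Adj 0 x then
      cE ⟨s(0, x), (unitaryCayleyGraph n).mem_edgeSet.mpr hx⟩ else cV 0 with hF
  set T := U.image F with hT
  have hTcard : T.card = n.totient := by
    rw [hT, Finset.card_image_of_injOn, ← card_isUnit (n := n)]
    intro x hx y hy hxy
    by_contra hne
    have hax := hadj x hx
    have hay := hadj y hy
    rw [hF] at hxy
    simp only [dif_pos hax, dif_pos hay] at hxy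
    refine h.2.1 _ _ ?_ ⟨0, ?_, ?_⟩ hxy
    · intro hc
      rw [Subtype.mk_eq_mk] at hc
      exact hne (Sym2.congr_right.mp hc)
    · exact Sym2.mem_mk_left 0 x
    · exact Sym2.mem_mk_left 0 y
  have hv0 : cV 0 ∉ T := by
    rw [hT]
    simp only [Finset.mem_image]
    rintro ⟨x, hx, hxe⟩
    have hax := hadj x hx
    rw [hF] at hxe
    simp only [dif_pos hax] at hxe
    exact h.2.2 _ 0 (Sym2.mem_mk_left 0 x) hxe
  have hins : (insert (cV 0) T).card = n.totient + 1 := by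
    rw [Finset.card_insert_of_notMem hv0, hTcard]
  calc n.totient + 1 = (insert (cV 0) T).card := hins.symm
  _ ≤ (Finset.univ : Finset (Fin K)).card := Finset.card_le_univ _
  _ = K := by simp

set_option maxHeartbeats 1000000 in
open scoped Classical in
lemma upper_bound {n p : ℕ} [NeZero n] (hp : p.Prime) (hp2 : p ≠ 2) (hpn : p ∣ n)
    (h2n : 2 ∣ n) (hn2 : 2 < n) :
    ∃ (cV : ZMod n → Fin (n.totient + 1))
      (cE : (unitaryCayleyGraph n).edgeSet → Fin (n.totient + 1)),
      IsTotalColoring (unitaryCayleyGraph n) cV cE := by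
  haveI : NeZero p := ⟨hp.pos.ne'⟩
  haveI : Fact (1 < p) := ⟨hp.one_lt⟩
  have hp3 : 2 < p := lt_of_le_of_ne hp.two_le (Ne.symm hp2)
  obtain ⟨hA, hple⟩ := Afin_card (n := n) hp hp2 hpn
  have hvlt : ∀ v : ZMod n, (pcast n p (2 * v)).val < n.totient + 1 := by
    intro v
    have := ZMod.val_lt (pcast n p (2 * v))
    omega
  have hsym : ∀ u v : ZMod n, ecol n p u v = ecol n p v u := fun u v => ecol_symm u v
  have hbound : ∀ e : (unitaryCayleyGraph n).edgeSet,
      Sym2.lift ⟨fun u v => ecol n p u v, hsym⟩ (e : Sym2 (ZMod n)) < n.totient + 1 := by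
    rintro ⟨e, he⟩
    induction e using Sym2.ind with
    | _ u v =>
      rw [SimpleGraph.mem_edgeSet, ucg_adj] at he
      rw [Sym2.lift_mk]
      exact ecol_lt hp hp2 hpn hn2 he.2
  refine ⟨fun v => ⟨(pcast n p (2 * v)).val, hvlt v⟩,
    fun e => ⟨Sym2.lift ⟨fun u v => ecol n p u v, hsym⟩ (e : Sym2 (ZMod n)), hbound e⟩,
    ?_, ?_, ?_⟩
  · intro u v hadj
    rw [ucg_adj] at hadj
    obtain ⟨hne, hu⟩ := hadj
    intro hc
    rw [Fin.mk.injEq] at hc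
    have hcc : pcast n p (2 * u) = pcast n p (2 * v) := ZMod.val_injective p hc
    rw [pcast_eq hpn, pcast_eq hpn] at hcc
    set φ := ZMod.castHom hpn (ZMod p) with hφ
    have h0 : φ ((u - v) * 2) = 0 := by
      have h1 : (u - v) * 2 = 2 * u - 2 * v := by ring
      rw [h1, map_sub, hcc, sub_self]
    rw [map_mul] at h0
    have h2 : φ (2 : ZMod n) = 2 := by
      have : ((2 : ℕ) : ZMod n) = (2 : ZMod n) := by norm_cast
      rw [← this, map_natCast]
      norm_cast
    rw [h2] at h0
    have h3 : φ (u - v) * 2 = φ (u - v) * 0 := by rw [mul_zero, h0]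
    have h4 := (hu.map φ).mul_left_cancel h3
    exact two_ne_zero_zmod hp3 h4
  · rintro ⟨e, he⟩ ⟨f, hf⟩ hef hshare
    obtain ⟨w, hwe, hwf⟩ := hshare
    simp only [Subtype.coe_mk] at hwe hwf
    rw [Sym2.mem_iff_exists] at hwe hwf
    obtain ⟨y, rfl⟩ := hwe
    obtain ⟨z, rfl⟩ := hwf
    rw [SimpleGraph.mem_edgeSet, ucg_adj] at he hf
    have hyz : y ≠ z := by
      intro h
      apply hef
      subst h
      rfl
    intro hc
    rw [Fin.mk.injEq, Sym2.lift_mk, Sym2.lift_mk] at hc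
    exact ecol_edge_ne hp hp2 hpn h2n hn2 hyz he.2 hf.2 hc
  · rintro ⟨e, he⟩ v hv
    simp only [Subtype.coe_mk] at hv
    rw [Sym2.mem_iff_exists] at hv
    obtain ⟨y, rfl⟩ := hv
    rw [SimpleGraph.mem_edgeSet, ucg_adj] at he
    intro hc
    rw [Fin.mk.injEq, Sym2.lift_mk] at hc
    exact ecol_vertex_ne hp hpn hn2 he.2 hc

theorem totalChromaticNumber_unitaryCayleyGraph_two_pow_mul_odd
    (k m : ℕ) (hk : 0 < k) (hm : 1 < m) (hmodd : Odd m) :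
    totalChromaticNumber (unitaryCayleyGraph (2 ^ k * m)) =
      Nat.totient (2 ^ k * m) + 1 := by
  set n := 2 ^ k * m with hn
  have hnpos : 0 < n := by positivity
  haveI : NeZero n := ⟨hnpos.ne'⟩
  set p := m.minFac with hpdef
  have hp : p.Prime := Nat.minFac_prime (by omega)
  have hpm : p ∣ m := Nat.minFac_dvd m
  have hp2 : p ≠ 2 := by
    intro h
    have h2m : (2 : ℕ) ∣ m := h ▸ hpm
    rcases hmodd with ⟨t, ht⟩
    omega
  have hpn : p ∣ n := hpm.trans ⟨2 ^ k, by ring⟩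
  have h2n : 2 ∣ n := (dvd_pow_self 2 hk.ne').mul_right m
  have hn2 : 2 < n := by
    have h2k : 2 ≤ 2 ^ k := by
      calc 2 = 2 ^ 1 := by norm_num
      _ ≤ 2 ^ k := Nat.pow_le_pow_right (by norm_num) hk
    have : 2 * 2 ≤ 2 ^ k * m := Nat.mul_le_mul h2k (by omega)
    omega
  obtain ⟨cV, cE, hcol⟩ := upper_bound hp hp2 hpn h2n hn2
  rw [totalChromaticNumber]
  apply le_antisymm
  · exact Nat.sInf_le ⟨cV, cE, hcol⟩
  · refine le_csInf ⟨n.totient + 1, ?_⟩ ?_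
    · exact ⟨cV, cE, hcol⟩
    · rintro K ⟨cV', cE', hcol'⟩
      exact lower_bound (by omega) cV' cE' hcol'
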